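/- For 2 ≤ ℓ < λ ≤ n-1 with λ ≥ ℓ+2 and any k, k' with λ < k ≤ n, and any tuple (i,j,k') of the matching field B^{λ-1}_{ℓ-1} satisfying ℓ < i < λ < j < k' (or with j < ℓ < i < λ, j < k'), the vertex sum decomposes: v_{(ℓ,λ,k)} + v_{(i,j,k')} = v_{(i,λ,k)} + v_{(ℓ,j,k')}, where all four tuples (ℓ,λ,k), (i,j,k'), (i,λ,k), (ℓ,j,k') are tuples of B^{λ-1}_{ℓ-1}. Consequently the segment from v_{(ℓ,λ,k)} to v_{(i,j,k')} is not an edge of the matching field polytope P_{B^{λ-1}_{ℓ-1}}. -/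

import Mathlib

open RealInnerProductSpace

/-- A vertex of a set `P` is a point `v` such that `{v}` is an exposed (0-dimensional) face. -/
def IsVertex {ι : Type*} [Fintype ι] (P : Set (EuclideanSpace ℝ ι)) (v : EuclideanSpace ℝ ι) : Prop :=
  IsExposed ℝ P {v}

/-- An edge of `P` is a 1-dimensional exposed face. -/
def IsEdge {ι : Type*} [Fintype ι] (P : Set (EuclideanSpace ℝ ι))
    (a b : EuclideanSpace ℝ ι) : Prop :=
  a ≠ b ∧ IsExposed ℝ P (segment ℝ a b)

/-- The vertex of `ℝ^{3×n}` associated to a tuple `(a,b,c)` (entries 1-indexed):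
`e_{1,a} + e_{2,b} + e_{3,c}`. -/
def tupleVertex (n : ℕ) (a b c : ℕ) : EuclideanSpace ℝ (Fin 3 × Fin n) :=
  WithLp.toLp 2 fun (p : Fin 3 × Fin n) =>
    if (p.1 = 0 ∧ (p.2 : ℕ) + 1 = a) ∨ (p.1 = 1 ∧ (p.2 : ℕ) + 1 = b) ∨
        (p.1 = 2 ∧ (p.2 : ℕ) + 1 = c) then 1 else 0

/-- The tuples of the intermediate matching field `B^{λ-1}_{ℓ-1}` for Gr(3,n)
(case `λ - 1 < n`). -/
def interTuples' (n ℓ lam : ℕ) : Set (ℕ × ℕ × ℕ) :=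
  { t | (∃ p q r : ℕ, 1 ≤ p ∧ p < q ∧ q ≤ ℓ - 1 ∧ q < r ∧ r ≤ n ∧ t = (p, q, r)) ∨
        (∃ p q r : ℕ, 1 ≤ p ∧ p ≤ ℓ - 1 ∧ ℓ - 1 < q ∧ q < r ∧ r ≤ n ∧ t = (q, p, r)) ∨
        (∃ q r : ℕ, ℓ < q ∧ q ≤ lam - 1 ∧ q < r ∧ r ≤ n ∧ t = (q, ℓ, r)) ∨
        (∃ q r : ℕ, lam - 1 < q ∧ q < r ∧ r ≤ n ∧ t = (ℓ, q, r)) ∨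
        (∃ p q r : ℕ, ℓ < p ∧ p < q ∧ q < r ∧ r ≤ n ∧ t = (p, q, r)) }

/-- The matching field polytope of `B^{λ-1}_{ℓ-1}`. -/
def interPolytope (n ℓ lam : ℕ) : Set (EuclideanSpace ℝ (Fin 3 × Fin n)) :=
  convexHull ℝ ((fun t : ℕ × ℕ × ℕ => tupleVertex n t.1 t.2.1 t.2.2) '' interTuples' n ℓ lam)

lemma not_edge_aux {ι : Type*} [Fintype ι] (P : Set (EuclideanSpace ℝ ι))
    (a b c d : EuclideanSpace ℝ ι) (hc : c ∈ P) (hd : d ∈ P)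
    (hsum : a + b = c + d) (hcs : c ∉ segment ℝ a b) :
    ¬ (a ≠ b ∧ IsExposed ℝ P (segment ℝ a b)) := by
  rintro ⟨hab, hexp⟩
  obtain ⟨f, hf⟩ := hexp ⟨a, left_mem_segment ℝ a b⟩
  have ha := left_mem_segment ℝ a b
  have hb := right_mem_segment ℝ a b
  rw [hf] at ha hb
  have hfc : f c ≤ f a := ha.2 c hc
  have hfd : f d ≤ f b := hb.2 d hd
  have hsum' : f c + f d = f a + f b := by
    rw [← map_add, ← map_add, hsum]
  have hca : f c = f a := by linarith
  exact hcs (hf ▸ ⟨hc, fun y hy => hca ▸ ha.2 y hy⟩)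

theorem stmt14' (n ℓ lam : ℕ) (hℓ : 2 ≤ ℓ) (hlam : ℓ + 2 ≤ lam) (hlam2 : lam ≤ n - 1)
    (k k' i j : ℕ) (hk1 : lam < k) (hk2 : k ≤ n)
    (hij : (i, j, k') ∈ interTuples' n ℓ lam)
    (hcase : (ℓ < i ∧ i < lam ∧ lam < j ∧ j < k') ∨ (j < ℓ ∧ ℓ < i ∧ i < lam ∧ j < k')) :
    tupleVertex n ℓ lam k + tupleVertex n i j k'
      = tupleVertex n i lam k + tupleVertex n ℓ j k' ∧
    (ℓ, lam, k) ∈ interTuples' n ℓ lam ∧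
    (i, lam, k) ∈ interTuples' n ℓ lam ∧
    (ℓ, j, k') ∈ interTuples' n ℓ lam ∧
    ¬ IsEdge (interPolytope n ℓ lam) (tupleVertex n ℓ lam k) (tupleVertex n i j k') := by
  have hn : lam + 1 ≤ n := by omega
  have hfacts : k' ≤ n ∧ 1 ≤ j ∧ (j < ℓ → ℓ < k') := by
    rcases hij with ⟨p,q,r,h1,h2,h3,h4,h5,heq⟩|⟨p,q,r,h1,h2,h3,h4,h5,heq⟩|
      ⟨q,r,h1,h2,h3,h4,heq⟩|⟨q,r,h1,h2,h3,heq⟩|⟨p,q,r,h1,h2,h3,h4,heq⟩ <;>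
      simp only [Prod.mk.injEq] at heq <;> omega
  have hsum : tupleVertex n ℓ lam k + tupleVertex n i j k'
      = tupleVertex n i lam k + tupleVertex n ℓ j k' := by
    ext p
    obtain ⟨r, c⟩ := p
    show tupleVertex n ℓ lam k (r,c) + tupleVertex n i j k' (r,c)
        = tupleVertex n i lam k (r,c) + tupleVertex n ℓ j k' (r,c)
    fin_cases r <;> simp [tupleVertex] <;> split_ifs <;> ring
  have m1 : (ℓ, lam, k) ∈ interTuples' n ℓ lam :=
    Or.inr (Or.inr (Or.inr (Or.inl ⟨lam, k, by omega, hk1, hk2, rfl⟩)))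
  have m2 : (i, lam, k) ∈ interTuples' n ℓ lam :=
    Or.inr (Or.inr (Or.inr (Or.inr ⟨i, lam, k, by omega, by omega, hk1, hk2, rfl⟩)))
  have m3 : (ℓ, j, k') ∈ interTuples' n ℓ lam := by
    rcases hcase with h | h
    · exact Or.inr (Or.inr (Or.inr (Or.inl ⟨j, k', by omega, by omega, hfacts.1, rfl⟩)))
    · exact Or.inr (Or.inl ⟨j, ℓ, k', by omega, by omega, by omega, by omega, hfacts.1, rfl⟩)
  refine ⟨hsum, m1, m2, m3, ?_⟩
  have hc : tupleVertex n i lam k ∈ interPolytope n ℓ lam :=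
    subset_convexHull ℝ _ ⟨(i, lam, k), m2, rfl⟩
  have hd : tupleVertex n ℓ j k' ∈ interPolytope n ℓ lam :=
    subset_convexHull ℝ _ ⟨(ℓ, j, k'), m3, rfl⟩
  apply not_edge_aux _ _ _ _ _ hc hd hsum
  rintro ⟨u, v, hu, hv, huv, heq⟩
  have hln : lam - 1 < n := by omega
  have hin : i - 1 < n := by omega
  set p1 : Fin 3 × Fin n := (1, ⟨lam - 1, hln⟩) with hp1
  set p0 : Fin 3 × Fin n := (0, ⟨i - 1, hin⟩) with hp0
  have e1 : tupleVertex n ℓ lam k p1 = 1 := by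
    simp only [tupleVertex, PiLp.toLp_apply, hp1, hp0]
    rw [if_pos]
    exact Or.inr (Or.inl ⟨trivial, by omega⟩)
  have e2 : tupleVertex n i j k' p1 = 0 := by
    simp only [tupleVertex, PiLp.toLp_apply, hp1, hp0]
    rw [if_neg]
    rintro (⟨h, _⟩ | ⟨_, h⟩ | ⟨h, _⟩)
    · exact absurd h (by decide)
    · omega
    · exact absurd h (by decide)
  have e3 : tupleVertex n i lam k p1 = 1 := by
    simp only [tupleVertex, PiLp.toLp_apply, hp1, hp0]
    rw [if_pos]
    exact Or.inr (Or.inl ⟨trivial, by omega⟩)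
  have f1 : tupleVertex n ℓ lam k p0 = 0 := by
    simp only [tupleVertex, PiLp.toLp_apply, hp1, hp0]
    rw [if_neg]
    rintro (⟨_, h⟩ | ⟨h, _⟩ | ⟨h, _⟩)
    · omega
    · exact absurd h (by decide)
    · exact absurd h (by decide)
  have f2 : tupleVertex n i j k' p0 = 1 := by
    simp only [tupleVertex, PiLp.toLp_apply, hp1, hp0]
    rw [if_pos]
    exact Or.inl ⟨trivial, by omega⟩
  have f3 : tupleVertex n i lam k p0 = 1 := by
    simp only [tupleVertex, PiLp.toLp_apply, hp1, hp0]
    rw [if_pos]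
    exact Or.inl ⟨trivial, by omega⟩
  have h1 := congrArg (fun x => x p1) heq
  have h0 := congrArg (fun x => x p0) heq
  have g1 : u * tupleVertex n ℓ lam k p1 + v * tupleVertex n i j k' p1
      = tupleVertex n i lam k p1 := h1
  have g0 : u * tupleVertex n ℓ lam k p0 + v * tupleVertex n i j k' p0
      = tupleVertex n i lam k p0 := h0
  rw [e1, e2, e3] at g1
  rw [f1, f2, f3] at g0
  nlinarith [g1, g0]

theorem stmt14 (n ℓ lam : ℕ) (hℓ : 2 ≤ ℓ) (hlam : ℓ + 2 ≤ lam) (hlam2 : lam ≤ n - 1)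
    (k k' i j : ℕ) (hk1 : lam < k) (hk2 : k ≤ n)
    (hij : (i, j, k') ∈ interTuples' n ℓ lam)
    (hcase : (ℓ < i ∧ i < lam ∧ lam < j ∧ j < k') ∨ (j < ℓ ∧ ℓ < i ∧ i < lam ∧ j < k')) :
    tupleVertex n ℓ lam k + tupleVertex n i j k'
      = tupleVertex n i lam k + tupleVertex n ℓ j k' ∧
    (ℓ, lam, k) ∈ interTuples' n ℓ lam ∧
    (i, lam, k) ∈ interTuples' n ℓ lam ∧
    (ℓ, j, k') ∈ interTuples' n ℓ lam ∧
    ¬ IsEdge (interPolytope n ℓ lam) (tupleVertex n ℓ lam k) (tupleVertex n i j k') := by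
  exact stmt14' n ℓ lam hℓ hlam hlam2 k k' i j hk1 hk2 hij hcase
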